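/- Let q₀ ∈ L¹(ℝ), σ ∈ {1, −1}, k ∈ ℝ, and set Q(y) = [[0, q₀(y)], [−σ conj(q₀(−y)), 0]] and Λ = [[0, σ], [1, 0]]. If Ψ : ℝ → M₂(ℂ) is a bounded measurable function satisfying Ψ(x) = I + ∫_{−∞}^x e^{−ik(y−x)σ₃} Q(y) Ψ(y) e^{ik(y−x)σ₃} dy for all x ∈ ℝ (the left Jost integral equation with spectral parameter −k), then the function Φ(x) := Λ · conj(Ψ(−x)) · Λ^{−1} satisfies Φ(x) = I − ∫_x^{∞} e^{ik(y−x)σ₃} Q(y) Φ(y) e^{−ik(y−x)σ₃} dy for all x ∈ ℝ (the right Jost integral equation with spectral parameter k). -/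
import Mathlib


open MeasureTheory Matrix

/-- `e^{z σ₃} = diag(e^z, e^{-z})`, where `σ₃ = diag(1, -1)` is the third Pauli matrix. -/
noncomputable def pauliExpZ (z : ℂ) : Matrix (Fin 2) (Fin 2) ℂ :=
  !![Complex.exp z, 0; 0, Complex.exp (-z)]

/-- The potential matrix `Q(y) = [[0, q₀(y)], [-σ conj(q₀(-y)), 0]]`. -/
noncomputable def potQ (q₀ : ℝ → ℂ) (σ : ℝ) (y : ℝ) : Matrix (Fin 2) (Fin 2) ℂ :=
  !![0, q₀ y; -(σ : ℂ) * (starRingEnd ℂ) (q₀ (-y)), 0]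

/-- `Λ = [[0, σ], [1, 0]]`. -/
noncomputable def lambdaM (σ : ℝ) : Matrix (Fin 2) (Fin 2) ℂ :=
  !![0, (σ : ℂ); 1, 0]

/-- `Φ(x) = Λ ⬝ conj(Ψ(-x)) ⬝ Λ⁻¹` (entrywise complex conjugation). -/
noncomputable def symmPhi (σ : ℝ) (Ψ : ℝ → Matrix (Fin 2) (Fin 2) ℂ) (x : ℝ) :
    Matrix (Fin 2) (Fin 2) ℂ :=
  lambdaM σ * (Ψ (-x)).map (fun z => (starRingEnd ℂ) z) * (lambdaM σ)⁻¹

lemma lambdaM_inv_eq (σ : ℝ) (hσ2 : (σ : ℂ) * σ = 1) :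
    (lambdaM σ)⁻¹ = !![0, 1; (σ : ℂ), 0] := by
  apply Matrix.inv_eq_right_inv
  simp [lambdaM, Matrix.mul_fin_two, hσ2, Matrix.one_fin_two]

lemma map_fin_two (M : Matrix (Fin 2) (Fin 2) ℂ) (f : ℂ → ℂ) :
    M.map f = !![f (M 0 0), f (M 0 1); f (M 1 0), f (M 1 1)] := by
  ext i j; fin_cases i <;> fin_cases j <;> simp

lemma symmPhi_eq (σ : ℝ) (hσ2 : (σ : ℂ) * σ = 1)
    (Ψ : ℝ → Matrix (Fin 2) (Fin 2) ℂ) (x : ℝ) :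
    symmPhi σ Ψ x =
      !![(starRingEnd ℂ) (Ψ (-x) 1 1), (σ : ℂ) * (starRingEnd ℂ) (Ψ (-x) 1 0);
         (σ : ℂ) * (starRingEnd ℂ) (Ψ (-x) 0 1), (starRingEnd ℂ) (Ψ (-x) 0 0)] := by
  rw [symmPhi, lambdaM_inv_eq σ hσ2, lambdaM, map_fin_two, Matrix.mul_fin_two,
    Matrix.mul_fin_two]
  have hσ2' : (σ : ℂ) ^ 2 = 1 := by rw [sq]; exact hσ2
  congr 1
  ring_nf
  simp only [hσ2', one_mul]

/-- If a bounded measurable `Ψ : ℝ → M₂(ℂ)` satisfies the left Jost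
integral equation with spectral parameter `-k`, i.e.
`Ψ(x) = I + ∫_{-∞}^x e^{-ik(y-x)σ₃} Q(y) Ψ(y) e^{ik(y-x)σ₃} dy`  (entrywise),
then `Φ(x) = Λ conj(Ψ(-x)) Λ⁻¹` satisfies the right Jost integral equation with spectral
parameter `k`: `Φ(x) = I - ∫_x^∞ e^{ik(y-x)σ₃} Q(y) Φ(y) e^{-ik(y-x)σ₃} dy` (entrywise). -/
theorem statement2 (q₀ : ℝ → ℂ) (hq₀ : Integrable q₀)
    (σ : ℝ) (hσ : σ = 1 ∨ σ = -1) (k : ℝ)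
    (Ψ : ℝ → Matrix (Fin 2) (Fin 2) ℂ)
    (hΨmeas : ∀ i j : Fin 2, Measurable (fun x : ℝ => Ψ x i j))
    (hΨbdd : ∃ C : ℝ, ∀ (x : ℝ) (i j : Fin 2), ‖Ψ x i j‖ ≤ C)
    (hΨ : ∀ (x : ℝ) (i j : Fin 2),
      Ψ x i j = (1 : Matrix (Fin 2) (Fin 2) ℂ) i j +
        ∫ y in Set.Iic x,
          (pauliExpZ (-Complex.I * (k : ℂ) * ((y : ℂ) - (x : ℂ))) * potQ q₀ σ y * Ψ y *
            pauliExpZ (Complex.I * (k : ℂ) * ((y : ℂ) - (x : ℂ)))) i j) :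
    ∀ (x : ℝ) (i j : Fin 2),
      symmPhi σ Ψ x i j = (1 : Matrix (Fin 2) (Fin 2) ℂ) i j -
        ∫ y in Set.Ici x,
          (pauliExpZ (Complex.I * (k : ℂ) * ((y : ℂ) - (x : ℂ))) * potQ q₀ σ y *
            symmPhi σ Ψ y *
            pauliExpZ (-Complex.I * (k : ℂ) * ((y : ℂ) - (x : ℂ)))) i j := by
  have hσ2 : (σ : ℂ) * σ = 1 := by rcases hσ with h | h <;> norm_num [h]
  have key : ∀ (x : ℝ) (i' j' : Fin 2), (starRingEnd ℂ) (Ψ (-x) i' j') =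
      (1 : Matrix (Fin 2) (Fin 2) ℂ) i' j' +
      ∫ y in Set.Ici x, (starRingEnd ℂ)
        ((pauliExpZ (-Complex.I * (k : ℂ) * (((-y : ℝ) : ℂ) - ((-x : ℝ) : ℂ))) *
            potQ q₀ σ (-y) * Ψ (-y) *
          pauliExpZ (Complex.I * (k : ℂ) * (((-y : ℝ) : ℂ) - ((-x : ℝ) : ℂ)))) i' j') := by
    intro x i' j'
    rw [hΨ (-x) i' j', map_add]
    congr 1
    · simp [Matrix.one_apply, apply_ite]
    · rw [← integral_conj]
      have h2 := integral_comp_neg_Iic (-x) (fun y : ℝ => (starRingEnd ℂ)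
        ((pauliExpZ (-Complex.I * (k : ℂ) * (((-y : ℝ) : ℂ) - ((-x : ℝ) : ℂ))) *
            potQ q₀ σ (-y) * Ψ (-y) *
          pauliExpZ (Complex.I * (k : ℂ) * (((-y : ℝ) : ℂ) - ((-x : ℝ) : ℂ)))) i' j'))
      simp only [neg_neg] at h2
      rw [h2, ← integral_Ici_eq_integral_Ioi]
  intro x i j
  rw [symmPhi_eq σ hσ2]
  fin_cases i <;> fin_cases j
  · -- (0,0)
    show (starRingEnd ℂ) (Ψ (-x) 1 1) = _
    rw [key x 1 1, Matrix.one_fin_two, sub_eq_add_neg, ← integral_neg]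
    norm_num
    try rw [add_right_inj]
    try rw [show ∀ f : ℝ → ℂ, ((σ:ℂ) * ∫ y in Set.Ici x, f y) = ∫ y in Set.Ici x, (σ:ℂ) * f y
      from fun f => (integral_const_mul _ _).symm]
    refine integral_congr_ae (Filter.Eventually.of_forall fun y => ?_)
    simp only [symmPhi_eq σ hσ2]
    simp [pauliExpZ, potQ, Matrix.mul_apply, Fin.sum_univ_two, Matrix.vecMul,
      dotProduct, _root_.map_mul, map_neg, map_sub, Complex.conj_I,
      Complex.conj_ofReal, ← Complex.exp_conj]
    rcases hσ with h | h <;> subst h <;> push_cast <;> ring_nf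
  · -- (0,1)
    show (σ : ℂ) * (starRingEnd ℂ) (Ψ (-x) 1 0) = _
    rw [key x 1 0, Matrix.one_fin_two, sub_eq_add_neg, ← integral_neg]
    norm_num
    try rw [add_right_inj]
    try rw [show ∀ f : ℝ → ℂ, ((σ:ℂ) * ∫ y in Set.Ici x, f y) = ∫ y in Set.Ici x, (σ:ℂ) * f y
      from fun f => (integral_const_mul _ _).symm]
    refine integral_congr_ae (Filter.Eventually.of_forall fun y => ?_)
    simp only [symmPhi_eq σ hσ2]
    simp [pauliExpZ, potQ, Matrix.mul_apply, Fin.sum_univ_two, Matrix.vecMul,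
      dotProduct, _root_.map_mul, map_neg, map_sub, Complex.conj_I,
      Complex.conj_ofReal, ← Complex.exp_conj]
    rcases hσ with h | h <;> subst h <;> push_cast <;> ring_nf
  · -- (1,0)
    show (σ : ℂ) * (starRingEnd ℂ) (Ψ (-x) 0 1) = _
    rw [key x 0 1, Matrix.one_fin_two, sub_eq_add_neg, ← integral_neg]
    norm_num
    try rw [add_right_inj]
    try rw [show ∀ f : ℝ → ℂ, ((σ:ℂ) * ∫ y in Set.Ici x, f y) = ∫ y in Set.Ici x, (σ:ℂ) * f y
      from fun f => (integral_const_mul _ _).symm]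
    refine integral_congr_ae (Filter.Eventually.of_forall fun y => ?_)
    simp only [symmPhi_eq σ hσ2]
    simp [pauliExpZ, potQ, Matrix.mul_apply, Fin.sum_univ_two, Matrix.vecMul,
      dotProduct, _root_.map_mul, map_neg, map_sub, Complex.conj_I,
      Complex.conj_ofReal, ← Complex.exp_conj]
    rcases hσ with h | h <;> subst h <;> push_cast <;> ring_nf
  · -- (1,1)
    show (starRingEnd ℂ) (Ψ (-x) 0 0) = _
    rw [key x 0 0, Matrix.one_fin_two, sub_eq_add_neg, ← integral_neg]
    norm_num
    try rw [add_right_inj]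
    try rw [show ∀ f : ℝ → ℂ, ((σ:ℂ) * ∫ y in Set.Ici x, f y) = ∫ y in Set.Ici x, (σ:ℂ) * f y
      from fun f => (integral_const_mul _ _).symm]
    refine integral_congr_ae (Filter.Eventually.of_forall fun y => ?_)
    simp only [symmPhi_eq σ hσ2]
    simp [pauliExpZ, potQ, Matrix.mul_apply, Fin.sum_univ_two, Matrix.vecMul,
      dotProduct, _root_.map_mul, map_neg, map_sub, Complex.conj_I,
      Complex.conj_ofReal, ← Complex.exp_conj]
    rcases hσ with h | h <;> subst h <;> push_cast <;> ring_nf
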